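/- Let A be a commutative Noetherian ring and α an ideal. A prime ideal p of A is an associated prime of α if and only if p = (α : (α : p)). -/

import Mathlib

private lemma ann_mk_eq_colon {A : Type*} [CommRing A] (α : Ideal A) (f : A) :
    (⊥ : Submodule A (A ⧸ α)).colon {(Ideal.Quotient.mk α f : A ⧸ α)}
      = α.colon (Ideal.span {f}) := by
  ext a
  rw [Submodule.mem_colon_singleton, Submodule.mem_bot, Ideal.mem_colon_span_singleton]
  have : a • (Ideal.Quotient.mk α f) = Ideal.Quotient.mk α (a * f) := rfl
  rw [this, Ideal.Quotient.eq_zero_iff_mem]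

/-- In a Noetherian ring, a prime p is an associated prime of α iff p = (α : (α : p)). -/
theorem associatedPrime_iff_colon_colon {A : Type*} [CommRing A] [IsNoetherianRing A]
    (α p : Ideal A) (hp : p.IsPrime) :
    p ∈ associatedPrimes A (A ⧸ α) ↔ p = α.colon (α.colon p) := by
  constructor
  · intro h'
    obtain ⟨-, x, hx⟩ := (isAssociatedPrime_iff (I := p) (M := A ⧸ α)).mp h'
    obtain ⟨f, rfl⟩ := Ideal.Quotient.mk_surjective x
    rw [ann_mk_eq_colon] at hx
    have hf : f ∈ α.colon p := by
      rw [Submodule.mem_colon]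
      intro y hy
      have := hx ▸ hy
      rw [SetLike.mem_coe, Ideal.mem_colon_span_singleton] at this
      simpa [mul_comm] using this
    apply le_antisymm
    · intro x hx'
      rw [Submodule.mem_colon]
      intro g hg
      rw [SetLike.mem_coe, Submodule.mem_colon] at hg
      simpa [mul_comm] using hg x hx'
    · calc α.colon (α.colon p) ≤ α.colon (Ideal.span {f}) :=
            Submodule.colon_mono le_rfl ((Ideal.span_singleton_le_iff_mem _).mpr hf)
        _ = p := hx.symm
  · intro h
    obtain ⟨s, hs⟩ : (α.colon p).FG := IsNoetherian.noetherian _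
    -- find f ∈ s with α.colon (span {f}) ≤ p
    have key : ∃ f ∈ s, α.colon (Ideal.span {f}) ≤ p := by
      by_contra hc
      push_neg at hc
      choose a ha hanp using fun f (hf : f ∈ s) =>
        SetLike.not_le_iff_exists.mp (hc f hf)
      classical
      set b := ∏ f ∈ s.attach, a f f.2 with hb
      have hbp : b ∉ p := by
        intro hbmem
        obtain ⟨i, -, hi⟩ := Ideal.IsPrime.prod_mem_iff.mp hbmem
        exact hanp i i.2 hi
      have hbcol : b ∈ α.colon (α.colon p) := by
        rw [← hs, Submodule.mem_colon]
        intro g hg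
        -- suffices b * f ∈ α for f ∈ s
        have : ∀ f ∈ s, b * f ∈ α := by
          intro f hf
          rw [hb, ← Finset.mul_prod_erase _ _ (Finset.mem_attach s ⟨f, hf⟩),
            mul_right_comm]
          exact Ideal.mul_mem_right _ _ (Ideal.mem_colon_span_singleton.mp (ha f hf))
        have hle : Ideal.span s ≤ α.colon (Ideal.span {b}) := by
          rw [Ideal.span_le]
          intro f hf
          rw [SetLike.mem_coe, Ideal.mem_colon_span_singleton, mul_comm]
          exact this f hf
        have := hle hg
        rw [Ideal.mem_colon_span_singleton] at this
        simpa [mul_comm] using this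
      exact hbp (h ▸ hbcol)
    obtain ⟨f, hfs, hfle⟩ := key
    have hfp : f ∈ α.colon p := hs ▸ Ideal.subset_span hfs
    have hpf : p = α.colon (Ideal.span {f}) := by
      apply le_antisymm _ hfle
      intro y hy
      rw [Ideal.mem_colon_span_singleton, mul_comm]
      exact Submodule.mem_colon.mp hfp y hy
    exact (isAssociatedPrime_iff (I := p) (M := A ⧸ α)).mpr ⟨hp, Ideal.Quotient.mk α f, by rw [ann_mk_eq_colon]; exact hpf⟩
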